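/- Let X and Y be separable metrizable spaces and let f : X → Y be Baire class 1. Then for every nonempty compact K ⊆ X, the restriction f↾K has a point of continuity. -/

import Mathlib

open Filter Topology TopologicalSpace

/-- A set is Fσ if it is a countable union of closed sets. -/
def IsFsigma {X : Type*} [TopologicalSpace X] (S : Set X) : Prop :=
  ∃ F : ℕ → Set X, (∀ n, IsClosed (F n)) ∧ S = ⋃ n, F n

/-- `f` is Baire class 1 if preimages of open sets are Fσ. -/
def BaireClassOne {X Y : Type*} [TopologicalSpace X] [TopologicalSpace Y] (f : X → Y) : Prop :=
  ∀ V : Set Y, IsOpen V → IsFsigma (f ⁻¹' V)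

lemma baireClassOne_aux {Z Y : Type*} [TopologicalSpace Z] [TopologicalSpace Y]
    [BaireSpace Z] [Nonempty Z] [SecondCountableTopology Y]
    (g : Z → Y) (hg : BaireClassOne g) : ∃ x, ContinuousAt g x := by
  obtain ⟨b, hbc, -, hb⟩ := TopologicalSpace.exists_countable_basis Y
  obtain ⟨e, he⟩ := (hbc.insert ∅).exists_eq_range (Set.insert_nonempty _ _)
  have heo : ∀ n, IsOpen (e n) := by
    intro n
    have : e n ∈ insert ∅ b := he ▸ Set.mem_range_self n
    rcases this with h | h
    · simp [h]
    · exact hb.isOpen h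
  set D : Set Z := ⋃ n, (g ⁻¹' e n \ interior (g ⁻¹' e n)) with hD
  have hmeagre : IsMeagre D := by
    apply isMeagre_iUnion
    intro n
    obtain ⟨F, hFc, hFU⟩ := hg (e n) (heo n)
    have hsub : g ⁻¹' e n \ interior (g ⁻¹' e n) ⊆ ⋃ m, (F m \ interior (F m)) := by
      intro x hx
      have hx1 : x ∈ ⋃ m, F m := hFU ▸ hx.1
      obtain ⟨m, hm⟩ := Set.mem_iUnion.mp hx1
      refine Set.mem_iUnion.mpr ⟨m, hm, fun h => hx.2 ?_⟩
      exact interior_mono (hFU ▸ Set.subset_iUnion F m) h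
    refine IsMeagre.mono hsub ?_
    apply isMeagre_iUnion
    intro m
    have hnd : IsNowhereDense (F m \ interior (F m)) := by
      have heq : F m \ interior (F m) = frontier (F m) := ((hFc m).frontier_eq).symm
      rw [heq]
      exact isClosed_frontier.isNowhereDense_iff.mpr (interior_frontier (hFc m))
    rw [isMeagre_iff_countable_union_isNowhereDense]
    exact ⟨{F m \ interior (F m)}, by simpa using hnd, Set.countable_singleton _,
      by simp⟩
  have hdense : Dense Dᶜ := dense_of_mem_residual hmeagre
  obtain ⟨x, hx⟩ := hdense.nonempty
  refine ⟨x, ?_⟩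
  rw [ContinuousAt, hb.nhds_hasBasis.tendsto_right_iff]
  rintro t ⟨htb, hxt⟩
  have htr : t ∈ Set.range e := he ▸ Set.mem_insert_of_mem _ htb
  obtain ⟨n, rfl⟩ := htr
  have hxn : x ∈ interior (g ⁻¹' e n) := by
    by_contra h
    exact hx (Set.mem_iUnion.mpr ⟨n, hxt, h⟩)
  filter_upwards [isOpen_interior.mem_nhds hxn] with y hy
  exact interior_subset (s := g ⁻¹' e n) hy

/-- If `X, Y` are separable metrizable spaces and `f : X → Y` is Baire class 1, then
the restriction of `f` to every nonempty compact `K ⊆ X` has a point of continuity. -/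
theorem baireClassOne_restrict_continuousAt {X Y : Type*}
    [TopologicalSpace X] [TopologicalSpace Y]
    [SeparableSpace X] [MetrizableSpace X] [SeparableSpace Y] [MetrizableSpace Y]
    (f : X → Y) (hf : BaireClassOne f) :
    ∀ K : Set X, IsCompact K → K.Nonempty →
      ∃ x : K, ContinuousAt (K.restrict f) x := by
  intro K hK hKne
  letI : MetricSpace X := TopologicalSpace.metrizableSpaceMetric X
  letI : MetricSpace Y := TopologicalSpace.metrizableSpaceMetric Y
  haveI : SecondCountableTopology Y := UniformSpace.secondCountable_of_separable Y
  haveI : CompactSpace K := isCompact_iff_compactSpace.mp hK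
  haveI : Nonempty K := hKne.to_subtype
  apply baireClassOne_aux
  intro V hV
  obtain ⟨F, hFc, hFU⟩ := hf V hV
  refine ⟨fun n => Subtype.val ⁻¹' F n, fun n => (hFc n).preimage continuous_subtype_val, ?_⟩
  have : K.restrict f ⁻¹' V = Subtype.val ⁻¹' (f ⁻¹' V) := rfl
  rw [this, hFU, Set.preimage_iUnion]
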